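/- Let w ≤ -1 be an integer, let S be a combinatorial w-Hom configuration, and let s ∈ S be an arc that has an overarc in S. Then there are exactly |w| d-admissible arcs a such that (S \ {s}) ∪ {a} is a combinatorial w-Hom configuration (one of these |w| arcs being s itself); equivalently, s has exactly |w| - 1 replacements. -/

import Mathlib

open Set

/-- An arc of the `∞`-gon: a pair of integers `(t, u)`, source `t`, target `u`. -/
abbrev Arc := ℤ × ℤ

/-- `(t,u)` is `d`-admissible for `d = w - 1`: `u - t ≤ w` and `u - t ≡ 1 (mod d)`. -/
def IsAdmissible (w : ℤ) (a : Arc) : Prop :=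
  a.2 - a.1 ≤ w ∧ (w - 1) ∣ (a.2 - a.1 - 1)

/-- `p` is an endpoint of the arc `a`. -/
def IsEndpoint (p : ℤ) (a : Arc) : Prop := p = a.1 ∨ p = a.2

/-- `b = (v,x)` is an overarc of `a = (t,u)` if `x < u < t < v`. -/
def OverarcOf (b a : Arc) : Prop := b.2 < a.2 ∧ a.2 < a.1 ∧ a.1 < b.1

/-- `b = (v,x)` is an overarc of the integer `p` if `x < p < v`. -/
def OverarcOfVertex (b : Arc) (p : ℤ) : Prop := b.2 < p ∧ p < b.1

/-- Arcs `a` and `b` share an endpoint. -/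
def SharesEndpoint (a b : Arc) : Prop :=
  a.1 = b.1 ∨ a.1 = b.2 ∨ a.2 = b.1 ∨ a.2 = b.2

/-- Arcs `a = (t,u)` and `b = (v,x)` strictly cross: `u < x < t < v` or `x < u < v < t`. -/
def StrictCross (a b : Arc) : Prop :=
  (a.2 < b.2 ∧ b.2 < a.1 ∧ a.1 < b.1) ∨ (b.2 < a.2 ∧ a.2 < b.1 ∧ b.1 < a.1)

/-- Two arcs cross if they share an endpoint or strictly cross. -/
def Cross (a b : Arc) : Prop := SharesEndpoint a b ∨ StrictCross a b

/-- `p` is isolated with respect to `X` if it is an endpoint of no arc of `X`. -/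
def Isolated (X : Set Arc) (p : ℤ) : Prop := ∀ a ∈ X, ¬ IsEndpoint p a

/-- `p` is an inner-isolated vertex of the arc `b` with respect to `X`: `p` is isolated,
`b` is an overarc of `p`, and no arc of `X` of which `b` is an overarc is an overarc of `p`. -/
def InnerIsolatedOf (X : Set Arc) (b : Arc) (p : ℤ) : Prop :=
  Isolated X p ∧ OverarcOfVertex b p ∧ ∀ c ∈ X, OverarcOf b c → ¬ OverarcOfVertex c p

/-- `p` is an outer-isolated vertex of `X`: isolated with no overarc in `X`. -/
def OuterIsolated (X : Set Arc) (p : ℤ) : Prop :=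
  Isolated X p ∧ ∀ b ∈ X, ¬ OverarcOfVertex b p

/-- A combinatorial `w`-Hom configuration: a set of `d`-admissible arcs (`d = w - 1`),
pairwise noncrossing, such that every arc has exactly `|w| - 1` inner-isolated vertices
and there are at most `|w|` outer-isolated vertices. -/
def IsHomConfig (w : ℤ) (S : Set Arc) : Prop :=
  (∀ a ∈ S, IsAdmissible w a) ∧
  (∀ a ∈ S, ∀ b ∈ S, a ≠ b → ¬ Cross a b) ∧
  (∀ a ∈ S, {p : ℤ | InnerIsolatedOf S a p}.encard = ((-w - 1).toNat : ℕ∞)) ∧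
  {p : ℤ | OuterIsolated S p}.encard ≤ ((-w).toNat : ℕ∞)

/-- A combinatorial `w`-Riedtmann configuration: a `w`-Hom configuration with at most
`|w| - 1` outer-isolated vertices. -/
def IsRiedtmann (w : ℤ) (S : Set Arc) : Prop :=
  IsHomConfig w S ∧ {p : ℤ | OuterIsolated S p}.encard ≤ ((-w - 1).toNat : ℕ∞)

/-- A combinatorial `w`-simple-minded system: a `w`-Riedtmann configuration in which
every arc has an overarc. -/
def IsSMS (w : ℤ) (S : Set Arc) : Prop :=
  IsRiedtmann w S ∧ ∀ a ∈ S, ∃ b ∈ S, OverarcOf b a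

/-- `t` is a replacement of `s` in the `w`-Hom configuration `S`. -/
def IsReplacement (w : ℤ) (S : Set Arc) (s t : Arc) : Prop :=
  t ≠ s ∧ IsHomConfig w ((S \ {s}) ∪ {t})

/-- `c` is a Ptolemy arc of class I associated to the strictly crossing arcs `a` and `b`:
one of the four arcs joining an endpoint of `a` to an endpoint of `b`. -/
def IsPtolemyI (a b c : Arc) : Prop :=
  StrictCross a b ∧ c.2 < c.1 ∧
    ((IsEndpoint c.1 a ∧ IsEndpoint c.2 b) ∨ (IsEndpoint c.1 b ∧ IsEndpoint c.2 a))

/-- `c` is a Ptolemy arc of class II associated to the neighbouring arcs `a` and `b`: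
the distance `1` is realised by endpoints `p` and `p - 1`, and `c` joins the endpoint of
`a` other than `p, p-1` to the endpoint of `b` other than `p, p-1`. -/
def IsPtolemyII (a b c : Arc) : Prop :=
  ¬ Cross a b ∧
  ∃ p e f : ℤ,
    (((IsEndpoint p a ∧ IsEndpoint (p - 1) b) ∧ (IsEndpoint e a ∧ e ≠ p) ∧
        (IsEndpoint f b ∧ f ≠ p - 1)) ∨
     ((IsEndpoint p b ∧ IsEndpoint (p - 1) a) ∧ (IsEndpoint e b ∧ e ≠ p) ∧
        (IsEndpoint f a ∧ f ≠ p - 1))) ∧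
    c = (max e f, min e f)

/-- `Y` is a set of `d`-admissible arcs closed under adjoining `d`-admissible Ptolemy arcs
of classes I and II. -/
def PtolemyClosed (w : ℤ) (Y : Set Arc) : Prop :=
  (∀ a ∈ Y, IsAdmissible w a) ∧
  ∀ a ∈ Y, ∀ b ∈ Y, ∀ c : Arc,
    (IsPtolemyI a b c ∨ IsPtolemyII a b c) → IsAdmissible w c → c ∈ Y

/-- The Ptolemy closure of `X`: the smallest set of `d`-admissible arcs containing `X`
and closed under adjoining `d`-admissible Ptolemy arcs of classes I and II. -/
def PtolemyClosure (w : ℤ) (X : Set Arc) : Set Arc :=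
  ⋂₀ {Y : Set Arc | X ⊆ Y ∧ PtolemyClosed w Y}

/-- `p` is a left fountain of `A`: infinitely many arcs of `A` have source `p`. -/
def LeftFountain (A : Set Arc) (p : ℤ) : Prop := {a ∈ A | a.1 = p}.Infinite

/-- `p` is a right fountain of `A`: infinitely many arcs of `A` have target `p`. -/
def RightFountain (A : Set Arc) (p : ℤ) : Prop := {a ∈ A | a.2 = p}.Infinite

/-- The set `X_S = { (t + j, u + j) : (t,u) ∈ S, 0 ≤ j ≤ |w| - 1 }`, corresponding to the
union of the shifted copies `Σ^i S` for `w + 1 ≤ i ≤ 0`. -/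
def ShiftFamily (w : ℤ) (S : Set Arc) : Set Arc :=
  {c : Arc | ∃ a ∈ S, ∃ j : ℤ, 0 ≤ j ∧ j ≤ -w - 1 ∧ c = (a.1 + j, a.2 + j)}

-- ===== aux =====

lemma arc_cases {a c : Arc} (h : ¬ Cross a c) (ha : a.2 < a.1) (hc : c.2 < c.1) :
    a = c ∨ a.1 < c.2 ∨ c.1 < a.2 ∨ OverarcOf a c ∨ OverarcOf c a := by
  obtain ⟨t, u⟩ := a; obtain ⟨v, x⟩ := c
  simp only [Cross, SharesEndpoint, StrictCross, OverarcOf, Prod.mk.injEq, not_or] at *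
  omega

lemma isolated_union {X : Set Arc} {a : Arc} {p : ℤ} :
    Isolated (X ∪ {a}) p ↔ Isolated X p ∧ ¬ IsEndpoint p a := by
  constructor
  · intro h
    exact ⟨fun c hc => h c (Or.inl hc), h a (Or.inr rfl)⟩
  · rintro ⟨h1, h2⟩ c (hc | rfl)
    · exact h1 c hc
    · exact h2

lemma inner_union {X : Set Arc} {e a : Arc} {p : ℤ} :
    InnerIsolatedOf (X ∪ {a}) e p ↔
      (Isolated X p ∧ ¬ IsEndpoint p a) ∧ OverarcOfVertex e p ∧
        ((∀ c ∈ X, OverarcOf e c → ¬ OverarcOfVertex c p) ∧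
          (OverarcOf e a → ¬ OverarcOfVertex a p)) := by
  simp only [InnerIsolatedOf, isolated_union, mem_union, mem_singleton_iff]
  constructor
  · rintro ⟨h1, h2, h3⟩
    exact ⟨h1, h2, fun c hc => h3 c (Or.inl hc), fun h => h3 a (Or.inr rfl) h⟩
  · rintro ⟨h1, h2, h3, h4⟩
    refine ⟨h1, h2, ?_⟩
    rintro c (hc | rfl)
    · exact h3 c hc
    · exact h4

lemma enat_helper {x : ℕ∞} {k m : ℕ} (h : x + (k : ℕ∞) = (m : ℕ∞)) :
    x = ((m - k : ℕ) : ℕ∞) ∧ k ≤ m := by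
  have hx : x ≠ ⊤ := by
    rintro rfl
    rw [top_add] at h
    exact (ENat.top_ne_coe m) h
  lift x to ℕ using hx
  have : x + k = m := by exact_mod_cast h
  constructor
  · exact_mod_cast congrArg (Nat.cast : ℕ → ℕ∞) (by omega : x = m - k)
  · omega

open Classical in
/-- Partition lemma: an interval inside an arc `c` splits into inner-isolated points of `c`
and the closed spans of maximal nested arcs. -/
lemma part_lemma (X : Set Arc) (hpos : ∀ e ∈ X, e.2 < e.1)
    (hnc : ∀ a ∈ X, ∀ b ∈ X, a ≠ b → ¬ Cross a b)
    (c : Arc) (hc : c ∈ X) (p q : ℤ) (hpq : p - 1 ≤ q)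
    (hsub : ∀ r : ℤ, p ≤ r → r ≤ q → c.2 < r ∧ r < c.1)
    (hsep : ∀ m ∈ X, OverarcOf c m → (p ≤ m.2 ∧ m.1 ≤ q) ∨ m.1 < p ∨ q < m.2) :
    ∃ (D : Finset Arc) (k : ℕ), (∀ m ∈ D, m ∈ X ∧ OverarcOf c m) ∧
      {r : ℤ | p ≤ r ∧ r ≤ q ∧ InnerIsolatedOf X c r}.encard = (k : ℕ∞) ∧
      q - p + 1 = (k : ℤ) + ∑ m ∈ D, (m.1 - m.2 + 1) := by
  -- the set of maximal children of c with span inside [p,q]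
  set Ch : Set Arc := {m | m ∈ X ∧ OverarcOf c m ∧
      (∀ f ∈ X, OverarcOf c f → ¬ OverarcOf f m) ∧ p ≤ m.2 ∧ m.1 ≤ q} with hCh
  have hChfin : Ch.Finite := by
    apply Set.Finite.subset ((Set.finite_Icc p q).prod (Set.finite_Icc p q))
    rintro ⟨m1, m2⟩ ⟨hmX, hmo, _, hm1, hm2⟩
    have := hpos _ hmX
    exact ⟨⟨by simpa using by omega, by simpa using by omega⟩, by constructor <;> simp <;> omega⟩
  set D := hChfin.toFinset with hD
  have hDmem : ∀ m, m ∈ D ↔ m ∈ Ch := fun m => hChfin.mem_toFinset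
  set F := (Finset.Icc p q).filter (fun r => InnerIsolatedOf X c r) with hF
  refine ⟨D, F.card, fun m hm => ⟨((hDmem m).1 hm).1, ((hDmem m).1 hm).2.1⟩, ?_, ?_⟩
  · have hFcoe : (F : Set ℤ) = {r : ℤ | p ≤ r ∧ r ≤ q ∧ InnerIsolatedOf X c r} := by
      ext r
      simp only [hF, Finset.coe_filter, Finset.mem_Icc, mem_setOf_eq]
      tauto
    rw [← hFcoe, Set.encard_coe_eq_coe_finsetCard]
  -- every maximal child's closed interval is inside [p,q]; coverage
  have hcover : Finset.Icc p q = F ∪ D.biUnion (fun m => Finset.Icc m.2 m.1) := by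
    apply Finset.ext
    intro r
    simp only [Finset.mem_union, Finset.mem_biUnion, hF, Finset.mem_filter, Finset.mem_Icc]
    constructor
    · intro hr
      by_cases hinner : InnerIsolatedOf X c r
      · exact Or.inl ⟨hr, hinner⟩
      · right
        -- find an arc of X nested in c whose closed span contains r
        have hrc : c.2 < r ∧ r < c.1 := hsub r hr.1 hr.2
        have hex : ∃ e ∈ X, OverarcOf c e ∧ e.2 ≤ r ∧ r ≤ e.1 := by
          simp only [InnerIsolatedOf, not_and, not_forall] at hinner
          by_cases hiso : Isolated X r
          · obtain ⟨e, heX, heo, hev⟩ := hinner hiso ⟨hrc.1, hrc.2⟩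
            rw [Decidable.not_not] at hev
            exact ⟨e, heX, heo, le_of_lt hev.1, le_of_lt hev.2⟩
          · simp only [Isolated, not_forall] at hiso
            obtain ⟨e, heX, hee⟩ := hiso
            simp only [Decidable.not_not] at hee
            have hepos := hpos e heX
            have hrmem : e.2 ≤ r ∧ r ≤ e.1 := by
              rcases hee with h | h <;> omega
            have hne : e ≠ c := by
              rintro rfl
              rcases hee with h | h <;> omega
            rcases arc_cases (hnc e heX c hc hne) hepos (hpos c hc) with h | h | h | h | h
            · exact absurd h hne
            · omega
            · omega
            · rcases hee with h' | h' <;> (exfalso; rcases h with ⟨h1, h2, h3⟩; omega)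
            · exact ⟨e, heX, h, hrmem⟩
        obtain ⟨e, heX, heo, her⟩ := hex
        -- pick a maximal one
        set G : Set Arc := {f | f ∈ X ∧ OverarcOf c f ∧ f.2 ≤ r ∧ r ≤ f.1} with hG
        have hGfin : G.Finite := by
          apply Set.Finite.subset ((Set.finite_Icc c.2 c.1).prod (Set.finite_Icc c.2 c.1))
          rintro ⟨m1, m2⟩ ⟨hmX, hmo, _⟩
          exact ⟨by simpa using by rcases hmo with ⟨h1,h2,h3⟩; constructor <;> omega,
            by simpa using by rcases hmo with ⟨h1,h2,h3⟩; constructor <;> omega⟩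
        obtain ⟨m, hmG, hmax⟩ := hGfin.exists_maximalFor (fun f => f.1 - f.2) G ⟨e, heX, heo, her⟩
        obtain ⟨hmX, hmo, hmr⟩ := hmG
        have hmmax : ∀ f ∈ X, OverarcOf c f → ¬ OverarcOf f m := by
          intro f hfX hfo hfm
          have hfG : f ∈ G := ⟨hfX, hfo, by rcases hfm with ⟨h1,h2,h3⟩; omega,
            by rcases hfm with ⟨h1,h2,h3⟩; omega⟩
          have : f.1 - f.2 ≤ m.1 - m.2 := hmax hfG (show m.1 - m.2 ≤ f.1 - f.2 by rcases hfm with ⟨h1,h2,h3⟩; omega)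
          rcases hfm with ⟨h1,h2,h3⟩; omega
        have hmCh : m ∈ Ch := by
          refine ⟨hmX, hmo, hmmax, ?_, ?_⟩ <;>
          · rcases hsep m hmX hmo with h | h | h <;> omega
        exact ⟨m, (hDmem m).2 hmCh, hmr⟩
    · rintro (⟨hr, _⟩ | ⟨m, hmD, hm⟩)
      · exact hr
      · obtain ⟨_, _, _, hm1, hm2⟩ := (hDmem m).1 hmD
        omega
  -- F disjoint from the union of children spans
  have hdisj : Disjoint F (D.biUnion (fun m => Finset.Icc m.2 m.1)) := by
    rw [Finset.disjoint_left]
    intro r hrF hrB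
    simp only [Finset.mem_biUnion, Finset.mem_Icc] at hrB
    obtain ⟨m, hmD, hm⟩ := hrB
    obtain ⟨hmX, hmo, _⟩ := (hDmem m).1 hmD
    simp only [hF, Finset.mem_filter] at hrF
    obtain ⟨_, hiso, _, hcl⟩ := hrF
    rcases eq_or_lt_of_le hm.1 with h1 | h1
    · exact hiso m hmX (Or.inr h1.symm)
    rcases eq_or_lt_of_le hm.2 with h2 | h2
    · exact hiso m hmX (Or.inl h2)
    exact hcl m hmX hmo ⟨h1, h2⟩
  -- children spans pairwise disjoint
  have hpw : ∀ m1 ∈ D, ∀ m2 ∈ D, m1 ≠ m2 →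
      Disjoint (Finset.Icc m1.2 m1.1) (Finset.Icc m2.2 m2.1) := by
    intro m1 hm1 m2 hm2 hne
    obtain ⟨h1X, h1o, h1max, _⟩ := (hDmem m1).1 hm1
    obtain ⟨h2X, h2o, h2max, _⟩ := (hDmem m2).1 hm2
    rcases arc_cases (hnc m1 h1X m2 h2X hne) (hpos m1 h1X) (hpos m2 h2X) with h | h | h | h | h
    · exact absurd h hne
    · rw [Finset.disjoint_left]; intro x hx1 hx2
      simp only [Finset.mem_Icc] at hx1 hx2; omega
    · rw [Finset.disjoint_left]; intro x hx1 hx2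
      simp only [Finset.mem_Icc] at hx1 hx2; omega
    · exact absurd h (h2max m1 h1X h1o)
    · exact absurd h (h1max m2 h2X h2o)
  -- count
  have hcard : (Finset.Icc p q).card = F.card + ∑ m ∈ D, (Finset.Icc m.2 m.1).card := by
    rw [hcover, Finset.card_union_of_disjoint hdisj, Finset.card_biUnion hpw]
  have h1 : ((Finset.Icc p q).card : ℤ) = q - p + 1 := by
    rw [Int.card_Icc]; omega
  have h2 : ∀ m ∈ D, ((Finset.Icc m.2 m.1).card : ℤ) = m.1 - m.2 + 1 := by
    intro m hm
    obtain ⟨hmX, _, _⟩ := (hDmem m).1 hm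
    have := hpos m hmX
    rw [Int.card_Icc]; omega
  have h3 : ((∑ m ∈ D, (Finset.Icc m.2 m.1).card : ℕ) : ℤ) = ∑ m ∈ D, (m.1 - m.2 + 1) := by
    push_cast
    exact Finset.sum_congr rfl h2
  have h4 := congrArg (fun x : ℕ => (x : ℤ)) hcard
  simp only [Nat.cast_add] at h4
  rw [h1] at h4
  rw [h4, h3]

open Classical in
lemma span_lemma (w : ℤ) (hw : w ≤ -1) (S : Set Arc) (hS : IsHomConfig w S) :
    ∀ c ∈ S, (1 - w) ∣ (c.1 - c.2 + 1) := by
  obtain ⟨hadm, hnc, hinner, _⟩ := hS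
  have hpos : ∀ e ∈ S, e.2 < e.1 := fun e he => by
    have := (hadm e he).1; omega
  have main : ∀ k : ℕ, ∀ c ∈ S, (c.1 - c.2).toNat = k → (1 - w) ∣ (c.1 - c.2 + 1) := by
    intro k
    induction k using Nat.strong_induction_on with
    | _ k ih =>
      intro c hc hk
      have hcpos := hpos c hc
      obtain ⟨D, k, hD, hk, heq⟩ := part_lemma S hpos hnc c hc (c.2 + 1) (c.1 - 1)
        (by omega) (by intro r h1 h2; omega)
        (by intro m hm hmo; left; rcases hmo with ⟨h1, h2, h3⟩; omega)
      have hFcoe : {r : ℤ | c.2 + 1 ≤ r ∧ r ≤ c.1 - 1 ∧ InnerIsolatedOf S c r}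
          = {p : ℤ | InnerIsolatedOf S c p} := by
        ext r
        simp only [mem_setOf_eq]
        constructor
        · exact fun h => h.2.2
        · intro h
          exact ⟨by obtain ⟨_, hv, _⟩ := h; obtain ⟨h1, h2⟩ := hv; omega,
            by obtain ⟨_, hv, _⟩ := h; obtain ⟨h1, h2⟩ := hv; omega, h⟩
      have hFcard : (k : ℤ) = -w - 1 := by
        have h0 := hinner c hc
        rw [← hFcoe, hk] at h0
        have h2 : k = (-w - 1).toNat := by exact_mod_cast h0
        omega
      have hdvd : ∀ m ∈ D, (1 - w) ∣ (m.1 - m.2 + 1) := by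
        intro m hm
        obtain ⟨hmS, hmo⟩ := hD m hm
        obtain ⟨h1, h2, h3⟩ := hmo
        exact ih (m.1 - m.2).toNat (by omega) m hmS rfl
      have hsum : (1 - w) ∣ ∑ m ∈ D, (m.1 - m.2 + 1) := Finset.dvd_sum hdvd
      have hfin : c.1 - c.2 + 1 = (1 - w) + ∑ m ∈ D, (m.1 - m.2 + 1) := by
        rw [hFcard] at heq; linarith
      rw [hfin]
      exact dvd_add ⟨1, (mul_one _).symm⟩ hsum
  intro c hc
  exact main (c.1 - c.2).toNat c hc rfl

lemma helper_iff (S : Set Arc) (s a e : Arc) (p : ℤ)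
    (hps : ¬ IsEndpoint p s) (hpa : ¬ IsEndpoint p a)
    (hcs : OverarcOf e s → ¬ OverarcOfVertex s p)
    (hca : OverarcOf e a → ¬ OverarcOfVertex a p) :
    InnerIsolatedOf ((S \ {s}) ∪ {a}) e p ↔ InnerIsolatedOf S e p := by
  rw [inner_union]
  constructor
  · rintro ⟨⟨hiso, _⟩, hov, hcl, _⟩
    refine ⟨?_, hov, ?_⟩
    · intro c hc
      by_cases h : c = s
      · subst h; exact hps
      · exact hiso c ⟨hc, h⟩
    · intro c hc hoc
      by_cases h : c = s
      · subst h; exact hcs hoc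
      · exact hcl c ⟨hc, h⟩ hoc
  · rintro ⟨hiso, hov, hcl⟩
    exact ⟨⟨fun c hc => hiso c hc.1, hpa⟩, hov,
      ⟨fun c hc => hcl c hc.1, hca⟩⟩

lemma unchanged_inner (S : Set Arc) (hpos : ∀ e ∈ S, e.2 < e.1)
    (hnc : ∀ x ∈ S, ∀ y ∈ S, x ≠ y → ¬ Cross x y)
    (s b a : Arc) (hsS : s ∈ S) (hbS : b ∈ S)
    (hbs : OverarcOf b s) (hba : OverarcOf b a)
    (hfree : ∀ c ∈ S, c ≠ s → OverarcOf b c →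
      ¬ OverarcOfVertex c s.1 ∧ ¬ OverarcOfVertex c s.2 ∧
      ¬ OverarcOfVertex c a.1 ∧ ¬ OverarcOfVertex c a.2)
    (e : Arc) (heS : e ∈ S) (hes : e ≠ s) (heb : e ≠ b) (p : ℤ) :
    InnerIsolatedOf ((S \ {s}) ∪ {a}) e p ↔ InnerIsolatedOf S e p := by
  obtain ⟨hbs1, hbs2, hbs3⟩ := hbs
  obtain ⟨hba1, hba2, hba3⟩ := hba
  have hbns : b ≠ s := by
    rintro rfl; omega
  by_cases hpe : e.2 < p ∧ p < e.1
  swap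
  · exact iff_of_false (fun h => hpe h.2.1) (fun h => hpe h.2.1)
  have hepos := hpos e heS
  have hbpos := hpos b hbS
  rcases arc_cases (hnc e heS b hbS heb) hepos hbpos with h | h | h | h | h
  · exact absurd h heb
  -- e entirely left of b
  · apply helper_iff
    · rintro (rfl | rfl) <;> omega
    · rintro (rfl | rfl) <;> omega
    · rintro ⟨h1, h2, h3⟩ ⟨h4, h5⟩; omega
    · rintro ⟨h1, h2, h3⟩ ⟨h4, h5⟩; omega
  -- e entirely right of b
  · apply helper_iff
    · rintro (rfl | rfl) <;> omega
    · rintro (rfl | rfl) <;> omega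
    · rintro ⟨h1, h2, h3⟩ ⟨h4, h5⟩; omega
    · rintro ⟨h1, h2, h3⟩ ⟨h4, h5⟩; omega
  -- e is an overarc of b
  · obtain ⟨he1, he2, he3⟩ := h
    by_cases hpb : p = b.1 ∨ p = b.2
    · refine iff_of_false (fun hI => ?_) (fun hI => ?_)
      · exact hI.1 b (Or.inl ⟨hbS, hbns⟩) hpb
      · exact hI.1 b hbS hpb
    by_cases hpin : b.2 < p ∧ p < b.1
    · refine iff_of_false (fun hI => ?_) (fun hI => ?_)
      · exact hI.2.2 b (Or.inl ⟨hbS, hbns⟩) ⟨he1, he2, he3⟩ hpin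
      · exact hI.2.2 b hbS ⟨he1, he2, he3⟩ hpin
    · apply helper_iff
      · rintro (rfl | rfl) <;> omega
      · rintro (rfl | rfl) <;> omega
      · rintro ⟨h1, h2, h3⟩ ⟨h4, h5⟩; omega
      · rintro ⟨h1, h2, h3⟩ ⟨h4, h5⟩; omega
  -- b is an overarc of e
  · obtain ⟨hf1, hf2, hf3, hf4⟩ := hfree e heS hes h
    obtain ⟨he1, he2, he3⟩ := h
    apply helper_iff
    · rintro (rfl | rfl)
      · exact hf1 ⟨hpe.1, hpe.2⟩
      · exact hf2 ⟨hpe.1, hpe.2⟩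
    · rintro (rfl | rfl)
      · exact hf3 ⟨hpe.1, hpe.2⟩
      · exact hf4 ⟨hpe.1, hpe.2⟩
    · rintro ⟨h1, h2, h3⟩ _
      exact hf1 ⟨by omega, by omega⟩
    · rintro ⟨h1, h2, h3⟩ _
      exact hf3 ⟨by omega, by omega⟩

lemma unchanged_outer (S : Set Arc) (s b a : Arc) (hsS : s ∈ S) (hbS : b ∈ S)
    (hbs : OverarcOf b s) (hba : OverarcOf b a) (p : ℤ) :
    OuterIsolated ((S \ {s}) ∪ {a}) p ↔ OuterIsolated S p := by
  obtain ⟨hbs1, hbs2, hbs3⟩ := hbs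
  obtain ⟨hba1, hba2, hba3⟩ := hba
  have hbns : b ≠ s := by rintro rfl; omega
  by_cases hpb : p = b.1 ∨ p = b.2
  · refine iff_of_false (fun hI => ?_) (fun hI => ?_)
    · exact hI.1 b (Or.inl ⟨hbS, hbns⟩) hpb
    · exact hI.1 b hbS hpb
  by_cases hpin : b.2 < p ∧ p < b.1
  · refine iff_of_false (fun hI => ?_) (fun hI => ?_)
    · exact hI.2 b (Or.inl ⟨hbS, hbns⟩) hpin
    · exact hI.2 b hbS hpin
  constructor
  · rintro ⟨hiso, hov⟩
    constructor
    · intro c hc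
      by_cases h : c = s
      · subst h; rintro (rfl | rfl) <;> omega
      · exact hiso c (Or.inl ⟨hc, h⟩)
    · intro c hc
      by_cases h : c = s
      · subst h; rintro ⟨h1, h2⟩; omega
      · exact hov c (Or.inl ⟨hc, h⟩)
  · rintro ⟨hiso, hov⟩
    constructor
    · rintro c (hc | rfl)
      · exact hiso c hc.1
      · rintro (rfl | rfl) <;> omega
    · rintro c (hc | rfl)
      · exact hov c hc.1
      · rintro ⟨h1, h2⟩; omega

lemma count_C (n : ℕ) (hn : 1 ≤ n) (P : Set ℤ) (hPfin : P.Finite)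
    (hPcard : hPfin.toFinset.card = 2 * n) :
    {a : Arc | a.2 ∈ P ∧ a.1 ∈ P ∧ a.2 < a.1 ∧
      (P ∩ Set.Ioo a.2 a.1).encard = ((n - 1 : ℕ) : ℕ∞)}.encard = (n : ℕ∞) := by
  set Pf := hPfin.toFinset with hPf
  set σ := Pf.orderIsoOfFin hPcard with hσ
  have hmem : ∀ x : ℤ, x ∈ P ↔ x ∈ Pf := fun x => (hPfin.mem_toFinset).symm
  have hσP : ∀ i, ((σ i : ℤ)) ∈ P := fun i => (hmem _).2 (σ i).2
  have hlt : ∀ i j : Fin (2 * n), ((σ i : ℤ) < (σ j : ℤ)) ↔ i < j := by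
    intro i j
    rw [show ((σ i : ℤ) < (σ j : ℤ)) ↔ σ i < σ j from Iff.rfl.mpr Subtype.coe_lt_coe]
    exact σ.lt_iff_lt
  have hinj : Function.Injective (fun k : Fin (2 * n) => (σ k : ℤ)) :=
    fun k1 k2 h => σ.injective (Subtype.coe_injective h)
  have between : ∀ i j : Fin (2 * n), i < j →
      (P ∩ Set.Ioo ((σ i : ℤ)) ((σ j : ℤ))).encard = (((j : ℕ) - i - 1 : ℕ) : ℕ∞) := by
    intro i j hij
    have himg : P ∩ Set.Ioo ((σ i : ℤ)) ((σ j : ℤ))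
        = (fun k : Fin (2 * n) => (σ k : ℤ)) '' (Set.Ioo i j) := by
      ext x
      constructor
      · rintro ⟨hxP, hx1, hx2⟩
        obtain ⟨k, hk⟩ := σ.surjective ⟨x, (hmem x).1 hxP⟩
        have hkx : (σ k : ℤ) = x := by rw [hk]
        refine ⟨k, ⟨?_, ?_⟩, hkx⟩
        · rw [← hlt]; omega
        · rw [← hlt]; omega
      · rintro ⟨k, ⟨h1, h2⟩, rfl⟩
        exact ⟨hσP k, (hlt i k).2 h1, (hlt k j).2 h2⟩
    rw [himg, hinj.encard_image, ← Finset.coe_Ioo,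
      Set.encard_coe_eq_coe_finsetCard, Fin.card_Ioo]
  set f : Fin n → Arc := fun i =>
    (((σ ⟨(i : ℕ) + n, by have := i.2; omega⟩ : Pf) : ℤ),
     ((σ ⟨(i : ℕ), by have := i.2; omega⟩ : Pf) : ℤ)) with hf
  have hCrange : {a : Arc | a.2 ∈ P ∧ a.1 ∈ P ∧ a.2 < a.1 ∧
      (P ∩ Set.Ioo a.2 a.1).encard = ((n - 1 : ℕ) : ℕ∞)} = Set.range f := by
    ext a
    simp only [mem_setOf_eq, Set.mem_range]
    constructor
    · rintro ⟨h2, h1, hlt', hcnt⟩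
      obtain ⟨i, hi⟩ := σ.surjective ⟨a.2, (hmem _).1 h2⟩
      obtain ⟨j, hj⟩ := σ.surjective ⟨a.1, (hmem _).1 h1⟩
      have hi' : (σ i : ℤ) = a.2 := by rw [hi]
      have hj' : (σ j : ℤ) = a.1 := by rw [hj]
      have hij : i < j := by rw [← hlt]; omega
      have hbet := between i j hij
      rw [hi', hj', hcnt] at hbet
      have hnum : (j : ℕ) - i - 1 = n - 1 := by exact_mod_cast hbet.symm
      have hi2 := i.2
      have hj2 := j.2
      have hijlt : (i : ℕ) < (j : ℕ) := hij
      have hin : (i : ℕ) < n ∧ (j : ℕ) = (i : ℕ) + n := by omega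
      refine ⟨⟨(i : ℕ), hin.1⟩, ?_⟩
      have e1 : (⟨(i : ℕ) + n, by omega⟩ : Fin (2 * n)) = j := by
        apply Fin.ext; simp [hin.2]
      have e2 : (⟨(i : ℕ), by omega⟩ : Fin (2 * n)) = i := by
        apply Fin.ext; simp
      rw [hf]
      refine Prod.ext ?_ ?_
      · show ((σ ⟨(i : ℕ) + n, _⟩ : Pf) : ℤ) = a.1
        rw [e1, hj']
      · show ((σ ⟨(i : ℕ), _⟩ : Pf) : ℤ) = a.2
        rw [e2, hi']
    · rintro ⟨i, rfl⟩
      have hi2 := i.2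
      have hltf : (f i).2 < (f i).1 := by
        rw [hf]
        apply (hlt _ _).2
        simp only [Fin.lt_def]
        omega
      refine ⟨hσP _, hσP _, hltf, ?_⟩
      have hbet := between ⟨(i : ℕ), by omega⟩ ⟨(i : ℕ) + n, by omega⟩
        (by simp only [Fin.lt_def]; omega)
      rw [hf]
      simp only at hbet ⊢
      rw [hbet]
      congr 1
      omega
  rw [hCrange]
  have hfinj : Function.Injective f := by
    intro i1 i2 h
    rw [hf] at h
    have h2 := congrArg Prod.snd h
    simp only at h2
    have h3 := hinj h2
    apply Fin.ext
    have h4 := congrArg Fin.val h3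
    simpa using h4
  rw [← Set.image_univ, hfinj.encard_image, ← Finset.coe_univ,
    Set.encard_coe_eq_coe_finsetCard, Finset.card_univ, Fintype.card_fin]


/-- if `s` is an arc of a combinatorial `w`-Hom configuration `S` (`w ≤ -1`)
having an overarc in `S`, then there are exactly `|w|` `d`-admissible arcs `a` such that
`(S \ {s}) ∪ {a}` is a combinatorial `w`-Hom configuration, one of them being `s` itself;
equivalently, `s` has exactly `|w| - 1` replacements. -/
theorem stmt_6 (w : ℤ) (hw : w ≤ -1) (S : Set Arc) (hS : IsHomConfig w S)
    (s : Arc) (hs : s ∈ S) (hover : ∃ b ∈ S, OverarcOf b s) :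
    {a : Arc | IsAdmissible w a ∧ IsHomConfig w ((S \ {s}) ∪ {a})}.encard
        = ((-w).toNat : ℕ∞) ∧
      s ∈ {a : Arc | IsAdmissible w a ∧ IsHomConfig w ((S \ {s}) ∪ {a})} ∧
      {t : Arc | IsReplacement w S s t}.encard = ((-w - 1).toNat : ℕ∞) := by
  classical
  obtain ⟨hadm, hnc, hinner, houter⟩ := hS
  have hS' : IsHomConfig w S := ⟨hadm, hnc, hinner, houter⟩
  set n : ℕ := (-w).toNat with hn
  have hnw : (n : ℤ) = -w := by omega
  have hn1 : 1 ≤ n := by omega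
  have hpos : ∀ e ∈ S, e.2 < e.1 := fun e he => by have := (hadm e he).1; omega
  -- minimal overarc of s
  obtain ⟨b0, hb0S, hb0s⟩ := hover
  have hex : ∃ k : ℕ, ∃ c, c ∈ S ∧ OverarcOf c s ∧ (c.1 - c.2).toNat = k :=
    ⟨_, b0, hb0S, hb0s, rfl⟩
  obtain ⟨b, hbS, hbs, hbk⟩ := Nat.find_spec hex
  have hbmin : ∀ c ∈ S, OverarcOf b c → ¬ OverarcOf c s := by
    intro c hc hbc hcs
    have hlt : (c.1 - c.2).toNat < Nat.find hex := by
      rw [← hbk]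
      obtain ⟨h1, h2, h3⟩ := hbc
      omega
    exact Nat.find_min hex hlt ⟨c, hc, hcs, rfl⟩
  have hspos := hpos s hs
  have hbpos := hpos b hbS
  have hbs1 : b.2 < s.2 := hbs.1
  have hbs3 : s.1 < b.1 := hbs.2.2
  have hbnes : b ≠ s := by rintro rfl; omega
  set T := S \ {s} with hT
  have hbT : b ∈ T := ⟨hbS, hbnes⟩
  have hposT : ∀ e ∈ T, e.2 < e.1 := fun e he => hpos e he.1
  have hncT : ∀ x ∈ T, ∀ y ∈ T, x ≠ y → ¬ Cross x y :=
    fun x hx y hy => hnc x hx.1 y hy.1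
  set P := {p : ℤ | InnerIsolatedOf T b p} with hP
  have hPiso : ∀ p ∈ P, Isolated T p := fun p hp => hp.1
  have hPio : ∀ p ∈ P, b.2 < p ∧ p < b.1 := fun p hp => hp.2.1
  have hcovP : ∀ c ∈ S, c ≠ s → OverarcOf b c → ∀ x ∈ P, ¬ (c.2 < x ∧ x < c.1) :=
    fun c hc hcs hbc x hx => hx.2.2 c ⟨hc, hcs⟩ hbc
  -- any arc over-vertexing an endpoint of s is an overarc of s
  have hcov : ∀ c ∈ S, c ≠ s → (OverarcOfVertex c s.1 ∨ OverarcOfVertex c s.2) →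
      OverarcOf c s := by
    intro c hcS hcs hv
    have hcpos := hpos c hcS
    rcases arc_cases (hnc c hcS s hs hcs) hcpos hspos with h | h | h | h | h
    · exact absurd h hcs
    · exfalso; rcases hv with ⟨h1, h2⟩ | ⟨h1, h2⟩ <;> omega
    · exfalso; rcases hv with ⟨h1, h2⟩ | ⟨h1, h2⟩ <;> omega
    · exact h
    · exfalso; obtain ⟨h1, h2, h3⟩ := h
      rcases hv with ⟨h4, h5⟩ | ⟨h4, h5⟩ <;> omega
  -- s's endpoints belong to P
  have hisoTs : ∀ p, IsEndpoint p s → Isolated T p := by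
    intro p hp e heT hpe
    refine hnc s hs e heT.1 (fun h => heT.2 h.symm) (Or.inl ?_)
    rcases hp with rfl | rfl <;> rcases hpe with h | h <;>
      simp [SharesEndpoint, h]
  have hs1P : s.1 ∈ P := by
    refine ⟨hisoTs s.1 (Or.inl rfl), ⟨by omega, by omega⟩, ?_⟩
    intro c hcT hbc hcv
    exact hbmin c hcT.1 hbc (hcov c hcT.1 hcT.2 (Or.inl hcv))
  have hs2P : s.2 ∈ P := by
    refine ⟨hisoTs s.2 (Or.inr rfl), ⟨by omega, by omega⟩, ?_⟩
    intro c hcT hbc hcv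
    exact hbmin c hcT.1 hbc (hcov c hcT.1 hcT.2 (Or.inr hcv))
  -- decomposition of P
  set Is := {p : ℤ | InnerIsolatedOf S s p} with hIs
  set Ib := {p : ℤ | InnerIsolatedOf S b p} with hIb
  have hPdecomp : P = (Is ∪ Ib) ∪ {s.1, s.2} := by
    ext p
    simp only [Set.mem_union, Set.mem_insert_iff, Set.mem_singleton_iff]
    constructor
    · rintro ⟨hiso, hov, hcl⟩
      by_cases hp1 : p = s.1 ∨ p = s.2
      · exact Or.inr hp1
      have hisoS : Isolated S p := by
        intro e heS
        by_cases h : e = s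
        · subst h; exact fun hend => hp1 hend
        · exact hiso e ⟨heS, h⟩
      left
      by_cases hp2 : s.2 < p ∧ p < s.1
      · left
        refine ⟨hisoS, hp2, ?_⟩
        intro c hcS hsc hcv
        have hcns : c ≠ s := by
          rintro rfl; obtain ⟨h1, h2, h3⟩ := hsc; omega
        have hbc : OverarcOf b c := by
          obtain ⟨h1, h2, h3⟩ := hsc
          exact ⟨by omega, h2, by omega⟩
        exact hcl c ⟨hcS, hcns⟩ hbc hcv
      · right
        refine ⟨hisoS, hov, ?_⟩
        intro c hcS hbc hcv
        by_cases h : c = s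
        · subst h; exact hp2 hcv
        · exact hcl c ⟨hcS, h⟩ hbc hcv
    · rintro ((⟨hiso, hov, hcl⟩ | ⟨hiso, hov, hcl⟩) | hp)
      · refine ⟨fun e he => hiso e he.1, ⟨by obtain ⟨h1, h2⟩ := hov; omega,
          by obtain ⟨h1, h2⟩ := hov; omega⟩, ?_⟩
        intro c hcT hbc hcv
        have hcpos := hpos c hcT.1
        rcases arc_cases (hnc c hcT.1 s hs hcT.2) hcpos hspos with h | h | h | h | h
        · exact hcT.2 h
        · obtain ⟨h1, h2⟩ := hov; obtain ⟨h3, h4⟩ := hcv; omega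
        · obtain ⟨h1, h2⟩ := hov; obtain ⟨h3, h4⟩ := hcv; omega
        · exact hbmin c hcT.1 hbc h
        · exact hcl c hcT.1 h hcv
      · exact ⟨fun e he => hiso e he.1, hov, fun c hcT => hcl c hcT.1⟩
      · rcases hp with rfl | rfl
        · exact hs1P
        · exact hs2P
  have hIs_card : Is.encard = ((n - 1 : ℕ) : ℕ∞) := by
    rw [hIs, hinner s hs]; congr 1; omega
  have hIb_card : Ib.encard = ((n - 1 : ℕ) : ℕ∞) := by
    rw [hIb, hinner b hbS]; congr 1; omega
  have hdisj2 : Disjoint Is Ib := by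
    rw [Set.disjoint_left]
    rintro p ⟨_, hov, _⟩ ⟨_, _, hcl⟩
    exact hcl s hs hbs hov
  have hdisj1 : Disjoint (Is ∪ Ib) ({s.1, s.2} : Set ℤ) := by
    rw [Set.disjoint_right]
    intro p hp hpu
    have hisoS : Isolated S p := by rcases hpu with h | h; exact h.1; exact h.1
    rcases hp with rfl | rfl
    · exact hisoS s hs (Or.inl rfl)
    · exact hisoS s hs (Or.inr rfl)
  have hPcard : P.encard = ((2 * n : ℕ) : ℕ∞) := by
    rw [hPdecomp, Set.encard_union_eq hdisj1, Set.encard_union_eq hdisj2,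
      hIs_card, hIb_card, Set.encard_pair (by omega : s.1 ≠ s.2)]
    have : (n - 1) + (n - 1) + 2 = 2 * n := by omega
    exact_mod_cast this
  have hPfin : P.Finite := Set.finite_of_encard_eq_coe hPcard
  set C := {a : Arc | a.2 ∈ P ∧ a.1 ∈ P ∧ a.2 < a.1 ∧
      (P ∩ Set.Ioo a.2 a.1).encard = ((n - 1 : ℕ) : ℕ∞)} with hC
  -- =================== direction C → A ===================
  have hCA : ∀ a ∈ C, IsAdmissible w a ∧ IsHomConfig w (T ∪ {a}) := by
    rintro a ⟨ha2P, ha1P, haLT, haCnt⟩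
    have hba : OverarcOf b a := ⟨(hPio a.2 ha2P).1, haLT, (hPio a.1 ha1P).2⟩
    have hba1 : b.2 < a.2 := hba.1
    have hba3 : a.1 < b.1 := hba.2.2
    have haT : a ∉ T := fun h => hPiso a.2 ha2P a h (Or.inr rfl)
    -- a does not cross any arc of T
    have hncross : ∀ e ∈ T, ¬ Cross a e ∧ ¬ Cross e a := by
      intro e heT
      have hepos := hposT e heT
      have hiso1 := hPiso a.1 ha1P e heT
      have hiso2 := hPiso a.2 ha2P e heT
      simp only [IsEndpoint, not_or] at hiso1 hiso2
      have hkey : ∀ y : ℤ, (y = e.1 ∨ y = e.2) → a.2 < y → y < a.1 → OverarcOf b e := by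
        intro y hy h1 h2
        have hneb : e ≠ b := by
          rintro rfl
          rcases hy with rfl | rfl <;> omega
        rcases arc_cases (hncT e heT b hbT hneb) hepos hbpos with h | h | h | h | h
        · exact absurd h hneb
        · exfalso; rcases hy with rfl | rfl <;> omega
        · exfalso; rcases hy with rfl | rfl <;> omega
        · exfalso; obtain ⟨g1, g2, g3⟩ := h; rcases hy with rfl | rfl <;> omega
        · exact h
      have hnst : ¬ (StrictCross a e ∨ StrictCross e a) := by
        rintro ((⟨h1, h2, h3⟩ | ⟨h1, h2, h3⟩) | (⟨h1, h2, h3⟩ | ⟨h1, h2, h3⟩))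
        · exact hcovP e heT.1 heT.2 (hkey e.2 (Or.inr rfl) h1 h2) a.1 ha1P ⟨h2, h3⟩
        · exact hcovP e heT.1 heT.2 (hkey e.1 (Or.inl rfl) h2 h3) a.2 ha2P ⟨h1, h2⟩
        · exact hcovP e heT.1 heT.2 (hkey e.1 (Or.inl rfl) h2 h3) a.2 ha2P ⟨h1, h2⟩
        · exact hcovP e heT.1 heT.2 (hkey e.2 (Or.inr rfl) h1 h2) a.1 ha1P ⟨h2, h3⟩
      constructor
      · rintro ((h | h | h | h) | h)
        · exact hiso1.1 h
        · exact hiso1.2 h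
        · exact hiso2.1 h
        · exact hiso2.2 h
        · exact hnst (Or.inl h)
      · rintro ((h | h | h | h) | h)
        · exact hiso1.1 h.symm
        · exact hiso2.1 h.symm
        · exact hiso1.2 h.symm
        · exact hiso2.2 h.symm
        · exact hnst (Or.inr h)
    -- cardinality of P on the closed interval of a
    have hinsert : P ∩ Set.Icc a.2 a.1 = insert a.2 (insert a.1 (P ∩ Set.Ioo a.2 a.1)) := by
      ext x
      simp only [Set.mem_inter_iff, Set.mem_Icc, Set.mem_Ioo, Set.mem_insert_iff]
      constructor
      · rintro ⟨hxP, hx1, hx2⟩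
        rcases eq_or_lt_of_le hx1 with h | h
        · exact Or.inl h.symm
        rcases eq_or_lt_of_le hx2 with h' | h'
        · exact Or.inr (Or.inl h')
        · exact Or.inr (Or.inr ⟨hxP, h, h'⟩)
      · rintro (rfl | rfl | ⟨hxP, h1, h2⟩)
        · exact ⟨ha2P, le_refl _, le_of_lt haLT⟩
        · exact ⟨ha1P, le_of_lt haLT, le_refl _⟩
        · exact ⟨hxP, le_of_lt h1, le_of_lt h2⟩
    have hPIcc : (P ∩ Set.Icc a.2 a.1).encard = ((n + 1 : ℕ) : ℕ∞) := by
      rw [hinsert, Set.encard_insert_of_notMem (by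
          rintro (h | ⟨_, h1, h2⟩) <;> omega),
        Set.encard_insert_of_notMem (by rintro ⟨_, h1, h2⟩; omega), haCnt]
      exact_mod_cast (by omega : (n - 1) + 1 + 1 = n + 1)
    -- admissibility of a
    have hadm_a : IsAdmissible w a := by
      obtain ⟨D, k, hD, hk, heq⟩ := part_lemma T hposT hncT b hbT a.2 a.1 (by omega)
        (fun r h1 h2 => ⟨by omega, by omega⟩)
        (by
          intro m hmT hbm
          have hiso1 := hPiso a.1 ha1P m hmT
          have hiso2 := hPiso a.2 ha2P m hmT
          simp only [IsEndpoint, not_or] at hiso1 hiso2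
          have hm1 := hcovP m hmT.1 hmT.2 hbm a.1 ha1P
          have hm2 := hcovP m hmT.1 hmT.2 hbm a.2 ha2P
          have := hposT m hmT
          omega)
      have hkP : {r : ℤ | a.2 ≤ r ∧ r ≤ a.1 ∧ InnerIsolatedOf T b r}
          = P ∩ Set.Icc a.2 a.1 := by
        ext r
        simp only [mem_setOf_eq, Set.mem_inter_iff, Set.mem_Icc, hP]
        tauto
      rw [hkP, hPIcc] at hk
      have hkval : k = n + 1 := by exact_mod_cast hk.symm
      have hsum_dvd : (1 - w) ∣ ∑ m ∈ D, (m.1 - m.2 + 1) :=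
        Finset.dvd_sum (fun m hm => span_lemma w hw S hS' m (hD m hm).1.1)
      have hsum_nonneg : 0 ≤ ∑ m ∈ D, (m.1 - m.2 + 1) :=
        Finset.sum_nonneg (fun m hm => by have := hposT m (hD m hm).1; omega)
      have heq' : a.1 - a.2 + 1 = (1 - w) + ∑ m ∈ D, (m.1 - m.2 + 1) := by
        rw [hkval] at heq
        push_cast at heq
        omega
      constructor
      · omega
      · rw [show w - 1 = -(1 - w) by ring, show a.2 - a.1 - 1 = -(a.1 - a.2 + 1) by ring,
          neg_dvd, dvd_neg, heq']
        exact dvd_add ⟨1, (mul_one _).symm⟩ hsum_dvd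
    refine ⟨hadm_a, ?_, ?_, ?_, ?_⟩
    -- (1) admissibility
    · rintro e (heT | rfl)
      · exact hadm e heT.1
      · exact hadm_a
    -- (2) noncrossing
    · rintro x (hx | rfl) y (hy | rfl) hxy
      · exact hncT x hx y hy hxy
      · exact (hncross x hx).2
      · exact (hncross y hy).1
      · exact absurd rfl hxy
    -- (3) inner-isolated counts
    · rintro e (heT | rfl)
      · by_cases heb : e = b
        · -- the arc b
          subst heb
          have hset : {p : ℤ | InnerIsolatedOf (T ∪ {a}) e p}
              = P \ Set.Icc a.2 a.1 := by
            ext p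
            rw [mem_setOf_eq, inner_union]
            constructor
            · rintro ⟨⟨hisoT, hpa⟩, hov, hclT, hcla⟩
              refine ⟨⟨hisoT, hov, hclT⟩, ?_⟩
              have h1 := hcla hba
              simp only [IsEndpoint, not_or] at hpa
              simp only [Set.mem_Icc]
              intro hcon
              have : ¬ (a.2 < p ∧ p < a.1) := h1
              omega
            · rintro ⟨hpP, hpIcc⟩
              simp only [Set.mem_Icc, not_and, not_le] at hpIcc
              refine ⟨⟨hPiso p hpP, ?_⟩, (hPio p hpP : _), hpP.2.2, ?_⟩
              · rintro (rfl | rfl) <;> omega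
              · rintro _ ⟨h1, h2⟩; omega
          rw [hset]
          have hdiffeq : (P \ Set.Icc a.2 a.1).encard + ((n + 1 : ℕ) : ℕ∞)
              = ((2 * n : ℕ) : ℕ∞) := by
            rw [← hPIcc, Set.encard_diff_add_encard_inter, hPcard]
          obtain ⟨hval, hle⟩ := enat_helper hdiffeq
          rw [hval]
          congr 1
          omega
        · -- other arcs of T
          have hfree : ∀ c ∈ S, c ≠ s → OverarcOf b c →
              ¬ OverarcOfVertex c s.1 ∧ ¬ OverarcOfVertex c s.2 ∧
              ¬ OverarcOfVertex c a.1 ∧ ¬ OverarcOfVertex c a.2 := by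
            intro c hcS hcs hbc
            exact ⟨fun h => hcovP c hcS hcs hbc s.1 hs1P h,
              fun h => hcovP c hcS hcs hbc s.2 hs2P h,
              fun h => hcovP c hcS hcs hbc a.1 ha1P h,
              fun h => hcovP c hcS hcs hbc a.2 ha2P h⟩
          have hset : {p : ℤ | InnerIsolatedOf (T ∪ {a}) e p}
              = {p : ℤ | InnerIsolatedOf S e p} := by
            ext p
            exact unchanged_inner S hpos hnc s b a hs hbS hbs hba hfree
              e heT.1 heT.2 heb p
          rw [hset]
          exact hinner e heT.1
      · -- the arc a itself
        have hset : {p : ℤ | InnerIsolatedOf (T ∪ {e}) e p} = P ∩ Set.Ioo e.2 e.1 := by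
          ext p
          rw [mem_setOf_eq, inner_union]
          constructor
          · rintro ⟨⟨hisoT, hpe⟩, hov, hclT, hcle⟩
            obtain ⟨ho1, ho2⟩ := hov
            refine ⟨⟨hisoT, ⟨by omega, by omega⟩, ?_⟩, ⟨ho1, ho2⟩⟩
            intro c hcT hbc hcv
            have hcpos := hposT c hcT
            have hcne : c ≠ e := fun h => haT (h ▸ hcT)
            rcases arc_cases (hncross c hcT).2 hcpos (by omega : e.2 < e.1)
              with h | h | h | h | h
            · exact hcne h
            · obtain ⟨g1, g2⟩ := hcv; omega
            · obtain ⟨g1, g2⟩ := hcv; omega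
            · obtain ⟨g1, g2, g3⟩ := h
              exact hcovP c hcT.1 hcT.2 hbc e.1 ha1P ⟨by omega, by omega⟩
            · exact hclT c hcT h hcv
          · rintro ⟨hpP, hpio⟩
            have hpio' : e.2 < p ∧ p < e.1 := hpio
            refine ⟨⟨hPiso p hpP, ?_⟩, ⟨hpio'.1, hpio'.2⟩, ?_, ?_⟩
            · rintro (rfl | rfl) <;> omega
            · intro c hcT hec hcv
              obtain ⟨g1, g2, g3⟩ := hec
              exact hcovP c hcT.1 hcT.2 ⟨by omega, g2, by omega⟩ p hpP hcv
            · intro h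
              exact absurd h.1 (lt_irrefl _)
        rw [hset, haCnt]
        congr 1
        omega
    -- (4) outer isolated
    · have hset : {p : ℤ | OuterIsolated (T ∪ {a}) p} = {p : ℤ | OuterIsolated S p} := by
        ext p
        exact unchanged_outer S s b a hs hbS hbs hba p
      rw [hset]
      exact houter
  -- =================== direction A → C ===================
  have hAC : ∀ a : Arc, IsAdmissible w a → IsHomConfig w (T ∪ {a}) → a ∈ C := by
    intro a hadma hcfg
    obtain ⟨hadm', hnc', hinner', houter'⟩ := hcfg
    have hapos : a.2 < a.1 := by have := hadma.1; omega
    have haT : a ∉ T := by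
      intro h
      have hTa : T ∪ {a} = T :=
        Set.union_eq_self_of_subset_right (Set.singleton_subset_iff.2 h)
      have h1 := hinner' b (Or.inl hbT)
      rw [hTa, ← hP, hPcard] at h1
      have h2 : 2 * n = (-w - 1).toNat := by exact_mod_cast h1
      omega
    have hncTa : ∀ e ∈ T, ¬ Cross a e ∧ ¬ Cross e a := by
      intro e heT
      have hne : a ≠ e := fun h => haT (h ▸ heT)
      exact ⟨hnc' a (Or.inr rfl) e (Or.inl heT) hne,
             hnc' e (Or.inl heT) a (Or.inr rfl) (Ne.symm hne)⟩
    have haiso1 : Isolated T a.1 := by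
      intro e heT hend
      exact (hncTa e heT).1 (Or.inl (by
        rcases hend with h | h
        exacts [Or.inl h, Or.inr (Or.inl h)]))
    have haiso2 : Isolated T a.2 := by
      intro e heT hend
      exact (hncTa e heT).1 (Or.inl (by
        rcases hend with h | h
        exacts [Or.inr (Or.inr (Or.inl h)), Or.inr (Or.inr (Or.inr h))]))
    have hIbNew : {p : ℤ | InnerIsolatedOf (T ∪ {a}) b p}
        = {p ∈ P | ¬ IsEndpoint p a ∧ (OverarcOf b a → ¬ OverarcOfVertex a p)} := by
      ext p
      rw [mem_setOf_eq, inner_union]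
      constructor
      · rintro ⟨⟨h1, h2⟩, h3, h4, h5⟩
        exact ⟨⟨h1, h3, h4⟩, h2, h5⟩
      · rintro ⟨⟨h1, h3, h4⟩, h2, h5⟩
        exact ⟨⟨h1, h2⟩, h3, h4, h5⟩
    have hcntb := hinner' b (Or.inl hbT)
    rw [hIbNew] at hcntb
    have hcntb' : {p ∈ P | ¬ IsEndpoint p a ∧
        (OverarcOf b a → ¬ OverarcOfVertex a p)}.encard = ((n - 1 : ℕ) : ℕ∞) := by
      rw [hcntb]; congr 1; omega
    have hba : OverarcOf b a := by
      by_contra hcon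
      have hseteq : {p ∈ P | ¬ IsEndpoint p a ∧ (OverarcOf b a → ¬ OverarcOfVertex a p)}
          = {p ∈ P | ¬ IsEndpoint p a} := by
        ext p; simp only [mem_setOf_eq]
        exact ⟨fun h => ⟨h.1, h.2.1⟩, fun h => ⟨h.1, h.2, fun hb' => absurd hb' hcon⟩⟩
      rw [hseteq] at hcntb'
      have hsub : P ⊆ {p ∈ P | ¬ IsEndpoint p a} ∪ {a.1, a.2} := by
        intro p hp
        by_cases h : IsEndpoint p a
        · right
          rcases h with h | h
          exacts [Or.inl h, Or.inr h]
        · left; exact ⟨hp, h⟩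
      have hP2 : ({a.1, a.2} : Set ℤ).encard = 2 := Set.encard_pair (by omega)
      have hle : ((2 * n : ℕ) : ℕ∞) ≤ ((n - 1 : ℕ) : ℕ∞) + 2 := by
        rw [← hPcard, ← hcntb', ← hP2]
        exact (Set.encard_le_encard hsub).trans (Set.encard_union_le _ _)
      have hle' : 2 * n ≤ (n - 1) + 2 := by exact_mod_cast hle
      have hn_eq : n = 1 := by omega
      have hempty : {p ∈ P | ¬ IsEndpoint p a} = ∅ := by
        rw [← Set.encard_eq_zero, hcntb', hn_eq]
        simp
      have hend : ∀ p ∈ P, IsEndpoint p a := by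
        intro p hp
        by_contra h
        have : p ∈ ({p ∈ P | ¬ IsEndpoint p a} : Set ℤ) := ⟨hp, h⟩
        rw [hempty] at this
        exact Set.notMem_empty p this
      have he1 := hend s.1 hs1P
      have he2 := hend s.2 hs2P
      have heq : a = s := by
        rcases he1 with h1 | h1 <;> rcases he2 with h2 | h2
        · exfalso; omega
        · exact Prod.ext h1.symm h2.symm
        · exfalso; omega
        · exfalso; omega
      exact hcon (by rw [heq]; exact hbs)
    have hba1 : b.2 < a.2 := hba.1
    have hba3 : a.1 < b.1 := hba.2.2
    have hseteq2 : {p ∈ P | ¬ IsEndpoint p a ∧ (OverarcOf b a → ¬ OverarcOfVertex a p)}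
        = P \ Set.Icc a.2 a.1 := by
      ext p
      simp only [mem_setOf_eq, Set.mem_diff, Set.mem_Icc, IsEndpoint, not_or]
      constructor
      · rintro ⟨hp, ⟨h1, h2⟩, h3⟩
        have h4 : ¬ (a.2 < p ∧ p < a.1) := h3 hba
        exact ⟨hp, by omega⟩
      · rintro ⟨hp, hc⟩
        refine ⟨hp, ⟨by omega, by omega⟩, fun _ => ?_⟩
        intro hv
        have hv' : a.2 < p ∧ p < a.1 := hv
        omega
    rw [hseteq2] at hcntb'
    have hIcc : (P ∩ Set.Icc a.2 a.1).encard = ((n + 1 : ℕ) : ℕ∞) := by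
      have h0 := Set.encard_diff_add_encard_inter P (Set.Icc a.2 a.1)
      rw [hcntb', hPcard] at h0
      rw [add_comm] at h0
      obtain ⟨hval, _⟩ := enat_helper h0
      rw [hval]; congr 1; omega
    have hne : (P ∩ Set.Icc a.2 a.1).Nonempty := by
      apply Set.nonempty_of_encard_ne_zero
      rw [hIcc]
      exact_mod_cast (by omega : n + 1 ≠ 0)
    have hendP : ∀ y : ℤ, (y = a.1 ∨ y = a.2) → y ∈ P := by
      intro y hy
      have hisoy : Isolated T y := by
        rcases hy with rfl | rfl
        exacts [haiso1, haiso2]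
      refine ⟨hisoy, ⟨by rcases hy with rfl | rfl <;> omega,
        by rcases hy with rfl | rfl <;> omega⟩, ?_⟩
      intro c hcT hbc hcv
      have hcpos := hposT c hcT
      have hcne : c ≠ a := fun h => haT (h ▸ hcT)
      have hca : OverarcOf c a := by
        rcases arc_cases (hncTa c hcT).2 hcpos hapos with h | h | h | h | h
        · exact absurd h hcne
        · exfalso; obtain ⟨g1, g2⟩ := hcv; rcases hy with rfl | rfl <;> omega
        · exfalso; obtain ⟨g1, g2⟩ := hcv; rcases hy with rfl | rfl <;> omega
        · exact h
        · exfalso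
          obtain ⟨g1, g2, g3⟩ := h
          obtain ⟨g4, g5⟩ := hcv
          rcases hy with rfl | rfl <;> omega
      obtain ⟨r, hrP, hrIcc⟩ := hne
      obtain ⟨g1, g2, g3⟩ := hca
      have hrIcc' : a.2 ≤ r ∧ r ≤ a.1 := hrIcc
      exact hcovP c hcT.1 hcT.2 hbc r hrP ⟨by omega, by omega⟩
    have ha1P : a.1 ∈ P := hendP a.1 (Or.inl rfl)
    have ha2P : a.2 ∈ P := hendP a.2 (Or.inr rfl)
    have hinsert : P ∩ Set.Icc a.2 a.1 = insert a.2 (insert a.1 (P ∩ Set.Ioo a.2 a.1)) := by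
      ext x
      simp only [Set.mem_inter_iff, Set.mem_Icc, Set.mem_Ioo, Set.mem_insert_iff]
      constructor
      · rintro ⟨hxP, hx1, hx2⟩
        rcases eq_or_lt_of_le hx1 with h | h
        · exact Or.inl h.symm
        rcases eq_or_lt_of_le hx2 with h' | h'
        · exact Or.inr (Or.inl h')
        · exact Or.inr (Or.inr ⟨hxP, h, h'⟩)
      · rintro (rfl | rfl | ⟨hxP, h1, h2⟩)
        · exact ⟨ha2P, le_refl _, le_of_lt hapos⟩
        · exact ⟨ha1P, le_of_lt hapos, le_refl _⟩
        · exact ⟨hxP, le_of_lt h1, le_of_lt h2⟩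
    rw [hinsert, Set.encard_insert_of_notMem (by
        rintro (h | ⟨_, h1, h2⟩) <;> omega),
      Set.encard_insert_of_notMem (by rintro ⟨_, h1, h2⟩; omega)] at hIcc
    have hIcc2 : (P ∩ Set.Ioo a.2 a.1).encard + ((2 : ℕ) : ℕ∞) = ((n + 1 : ℕ) : ℕ∞) := by
      rw [← hIcc]
      push_cast
      ring
    obtain ⟨hval, _⟩ := enat_helper hIcc2
    refine ⟨ha2P, ha1P, hapos, ?_⟩
    simpa [show n + 1 - 2 = n - 1 from by omega] using hval
  -- =================== conclusion ===================
  have hACeq : {a : Arc | IsAdmissible w a ∧ IsHomConfig w (T ∪ {a})} = C := by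
    ext a
    simp only [mem_setOf_eq]
    exact ⟨fun h => hAC a h.1 h.2, fun h => hCA a h⟩
  have hPfcard : hPfin.toFinset.card = 2 * n := by
    have h0 := hPfin.encard_eq_coe_toFinset_card
    rw [hPcard] at h0
    exact_mod_cast h0.symm
  have hCcard : C.encard = (n : ℕ∞) := count_C n hn1 P hPfin hPfcard
  have hTs : T ∪ {s} = S := Set.diff_union_of_subset (Set.singleton_subset_iff.2 hs)
  have hsA : s ∈ {a : Arc | IsAdmissible w a ∧ IsHomConfig w (T ∪ {a})} := by
    refine ⟨hadm s hs, ?_⟩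
    rw [hTs]
    exact hS'
  have hAcard : {a : Arc | IsAdmissible w a ∧ IsHomConfig w (T ∪ {a})}.encard = (n : ℕ∞) := by
    rw [hACeq]
    exact hCcard
  refine ⟨hAcard, hsA, ?_⟩
  have hrep : {t : Arc | IsReplacement w S s t}
      = {a : Arc | IsAdmissible w a ∧ IsHomConfig w (T ∪ {a})} \ {s} := by
    ext t
    simp only [mem_setOf_eq, Set.mem_diff, Set.mem_singleton_iff]
    constructor
    · rintro ⟨h1, h2⟩
      exact ⟨⟨h2.1 t (Or.inr rfl), h2⟩, h1⟩
    · rintro ⟨⟨h1, h2⟩, h3⟩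
      exact ⟨h3, h2⟩
  rw [hrep, Set.encard_diff_singleton_of_mem hsA, hAcard,
    show ((-w - 1).toNat : ℕ∞) = ((n - 1 : ℕ) : ℕ∞) by congr 1; omega,
    ENat.coe_sub, Nat.cast_one]
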